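/- Let n ≥ 1 and d = 2. For α, β ∈ F, the deformations (R̃_α, t, j) and (R̃_β, t, j) of R = F[u]/(u^{n+1}) are isomorphic as deformations of R if and only if β − α = γ·(n+1) for some γ ∈ F (i.e. β − α lies in the image of multiplication by n+1 on F; in particular, if n+1 is invertible in F then all R̃_α are isomorphic, and if the characteristic of F divides n+1 then R̃_α ≅ R̃_β only for α = β). -/

import Mathlib

/-- A finite-dimensional graded-commutative ℤ-graded `F`-algebra
("graded F-algebra" in the sense of Seidel's paper). -/
structure GradedFAlg (F : Type) [Field F] where
  carrier : Type
  [ring : Ring carrier]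
  [alg : Algebra F carrier]
  grading : ℤ → Submodule F carrier
  [gradedAlgebra : GradedAlgebra grading]
  [findim : FiniteDimensional F carrier]
  gcomm : ∀ (i j : ℤ) (x y : carrier), x ∈ grading i → y ∈ grading j →
    x * y = ((-1 : F) ^ (i * j)) • (y * x)

attribute [instance] GradedFAlg.ring GradedFAlg.alg GradedFAlg.gradedAlgebra GradedFAlg.findim

variable {F : Type} [Field F]

/-- A homomorphism of graded `F`-algebras. -/
structure GradedFAlg.Hom (A B : GradedFAlg F) where
  toAlgHom : A.carrier →ₐ[F] B.carrier
  graded : ∀ (i : ℤ) (x : A.carrier), x ∈ A.grading i → toAlgHom x ∈ B.grading i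

/-- The identity homomorphism of graded `F`-algebras. -/
def GradedFAlg.Hom.id (A : GradedFAlg F) : GradedFAlg.Hom A A :=
  ⟨AlgHom.id F A.carrier, fun _ _ h => h⟩

/-- A `d`-dimensional (first order infinitesimal) deformation `(R̃, t, j)` of `A`:
`t ∈ R̃^d` with `t² = 0` whose annihilator is exactly `t·R̃`, and `j : R̃ → A`
a surjective homomorphism of graded algebras with kernel `t·R̃`. -/
structure Deformation (F : Type) [Field F] (A : GradedFAlg F) (d : ℤ) where
  alg : GradedFAlg F
  t : alg.carrier
  t_mem : t ∈ alg.grading d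
  t_sq : t * t = 0
  t_ann : ∀ x : alg.carrier, t * x = 0 ↔ ∃ y : alg.carrier, x = t * y
  j : GradedFAlg.Hom alg A
  j_surj : Function.Surjective j.toAlgHom
  j_ker : ∀ x : alg.carrier, j.toAlgHom x = 0 ↔ ∃ y : alg.carrier, x = t * y

/-- A morphism of deformations over a homomorphism `f` of graded `F`-algebras. -/
structure DefMorphismOver {A B : GradedFAlg F} (f : GradedFAlg.Hom A B) {d : ℤ}
    (D1 : Deformation F A d) (D2 : Deformation F B d) where
  toHom : GradedFAlg.Hom D1.alg D2.alg
  map_t : toHom.toAlgHom D1.t = D2.t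
  over' : ∀ x, D2.j.toAlgHom (toHom.toAlgHom x) = f.toAlgHom (D1.j.toAlgHom x)

/-- Two deformations of `A` are isomorphic if there is a bijective morphism of
deformations (i.e. a morphism over the identity of `A`) between them. -/
def Deformation.Iso {A : GradedFAlg F} {d : ℤ} (D1 D2 : Deformation F A d) : Prop :=
  ∃ φ : DefMorphismOver (GradedFAlg.Hom.id A) D1 D2, Function.Bijective φ.toHom.toAlgHom

/-- `R` is (a model of) the cohomology `F[u]/(u^{n+1})` of `ℂPⁿ`: `u` has
degree `2`, `u^{n+1} = 0`, and `1, u, …, uⁿ` is an `F`-basis of `R`. -/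
structure IsCPnAlg (R : GradedFAlg F) (u : R.carrier) (n : ℕ) : Prop where
  u_mem : u ∈ R.grading 2
  u_pow : u ^ (n + 1) = 0
  basis : ∃ b : Module.Basis (Fin (n + 1)) F R.carrier, ∀ i : Fin (n + 1), b i = u ^ (i : ℕ)

/-- The deformation `D` of `R = F[u]/(u^{n+1})` "is" the deformation
`R̃_α = F[ũ, t]/(ũ^{n+1} + α·t·ũ^{n+1-d/2}, t²)` with `j(ũ) = u`, `j(t) = 0`:
it contains an element `ũ` of degree `2` lifting `u` and satisfying the defining
relation. (These data determine `R̃_α` up to isomorphism of deformations.) -/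
structure IsRAlphaDef (R : GradedFAlg F) (u : R.carrier) (n : ℕ) (d : ℤ) (α : F)
    (D : Deformation F R d) (ut : D.alg.carrier) : Prop where
  mem : ut ∈ D.alg.grading 2
  j_u : D.j.toAlgHom ut = u
  rel : ut ^ (n + 1) + α • (D.t * ut ^ ((n : ℤ) + 1 - d / 2).toNat) = 0

section Helpers
variable {F : Type} [Field F] {R : GradedFAlg F} {u : R.carrier} {n : ℕ}
  {α : F} {D : Deformation F R 2} {ut : D.alg.carrier}

lemma tcomm (h : IsRAlphaDef R u n 2 α D ut) : D.t * ut = ut * D.t := by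
  have := D.alg.gcomm 2 2 D.t ut D.t_mem h.mem
  rw [this]; norm_num

lemma tcomm_pow (h : IsRAlphaDef R u n 2 α D ut) (m : ℕ) :
    D.t * ut ^ m = ut ^ m * D.t :=
  ((Commute.pow_right (tcomm h) m)).eq

lemma rel' (h : IsRAlphaDef R u n 2 α D ut) :
    ut ^ (n + 1) = -(α • (D.t * ut ^ n)) := by
  have hrel := h.rel
  have hn : (((n : ℤ) + 1 - 2 / 2).toNat) = n := by omega
  rw [hn] at hrel
  exact eq_neg_of_add_eq_zero_left hrel

lemma j_t : D.j.toAlgHom D.t = 0 := (D.j_ker _).2 ⟨1, (mul_one _).symm⟩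

lemma j_pow (h : IsRAlphaDef R u n 2 α D ut) (m : ℕ) :
    D.j.toAlgHom (ut ^ m) = u ^ m := by rw [map_pow, h.j_u]

lemma upow_li (hR : IsCPnAlg R u n) :
    LinearIndependent F (fun i : Fin (n+1) => u ^ (i : ℕ)) := by
  obtain ⟨b, hb⟩ := hR.basis
  have : (fun i : Fin (n+1) => u ^ (i : ℕ)) = b := by funext i; rw [hb]
  exact this ▸ b.linearIndependent

lemma upow_ne (hR : IsCPnAlg R u n) {m : ℕ} (hm : m ≤ n) : u ^ m ≠ 0 := by
  have := (upow_li hR).ne_zero ⟨m, Nat.lt_succ_of_le hm⟩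
  simpa using this

lemma t_mul_pow_ne (hR : IsCPnAlg R u n) (h : IsRAlphaDef R u n 2 α D ut) :
    D.t * ut ^ n ≠ 0 := by
  intro h0
  obtain ⟨y, hy⟩ := (D.t_ann _).1 h0
  have : u ^ n = 0 := by
    have := congrArg D.j.toAlgHom hy
    rwa [j_pow h, map_mul, j_t, zero_mul] at this
  exact upow_ne hR le_rfl this

lemma t_mul_succ (h : IsRAlphaDef R u n 2 α D ut) : D.t * ut ^ (n + 1) = 0 := by
  rw [rel' h, mul_neg, mul_smul_comm, ← mul_assoc, D.t_sq, zero_mul, smul_zero, neg_zero]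

lemma pow_zero' (h : IsRAlphaDef R u n 2 α D ut) : ut ^ (n + 2) = 0 := by
  have : ut ^ (n + 2) = ut ^ (n+1) * ut := by rw [pow_succ]
  rw [this, rel' h, neg_mul, smul_mul_assoc, mul_assoc, ← pow_succ, t_mul_succ h,
    smul_zero, neg_zero]

lemma t_mul_ge (h : IsRAlphaDef R u n 2 α D ut) {m : ℕ} (hm : n + 1 ≤ m) :
    D.t * ut ^ m = 0 := by
  obtain ⟨k, rfl⟩ := Nat.exists_eq_add_of_le hm
  rw [pow_add, ← mul_assoc, t_mul_succ h, zero_mul]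

lemma pow_ge (h : IsRAlphaDef R u n 2 α D ut) {m : ℕ} (hm : n + 2 ≤ m) :
    ut ^ m = 0 := by
  obtain ⟨k, rfl⟩ := Nat.exists_eq_add_of_le hm
  rw [pow_add, pow_zero' h, zero_mul]

lemma add_smul_t_pow {A : Type} [Ring A] [Algebra F A] {t x : A} (ht : t * t = 0)
    (hc : t * x = x * t) (c : F) : ∀ m : ℕ, (x + c • t) ^ (m + 1) =
      x ^ (m + 1) + (((m + 1 : ℕ) : F) * c) • (t * x ^ m)
  | 0 => by simp
  | (m+1) => by
    have hpc : ∀ k : ℕ, t * x ^ k = x ^ k * t := fun k => ((Commute.pow_right hc k)).eq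
    have h1 : t * x ^ m * x = t * x ^ (m+1) := by rw [mul_assoc, ← pow_succ]
    have h2 : t * x ^ m * (c • t) = 0 := by
      rw [mul_smul_comm, mul_assoc, ← hpc, ← mul_assoc, ht, zero_mul, smul_zero]
    have h3 : x ^ (m+1) * (c • t) = c • (t * x ^ (m+1)) := by
      rw [mul_smul_comm, hpc]
    rw [pow_succ, add_smul_t_pow ht hc c m, add_mul, mul_add, mul_add,
      smul_mul_assoc, smul_mul_assoc, h1, h2, h3, ← pow_succ, smul_zero, add_zero,
      add_assoc, ← add_smul]
    congr 1
    push_cast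
    ring_nf

variable (n D ut) in
noncomputable def defFam : Fin (n+1) ⊕ Fin (n+1) → D.alg.carrier :=
  Sum.elim (fun i => ut ^ (i : ℕ)) (fun i => D.t * ut ^ (i : ℕ))

lemma fam_li (hR : IsCPnAlg R u n) (h : IsRAlphaDef R u n 2 α D ut) :
    LinearIndependent F (defFam n D ut) := by
  rw [Fintype.linearIndependent_iff]
  intro g hg
  rw [Fintype.sum_sum_type] at hg
  have hli := Fintype.linearIndependent_iff.1 (upow_li hR)
  have ha : ∀ i : Fin (n+1), g (Sum.inl i) = 0 := by
    apply hli
    have := congrArg D.j.toAlgHom hg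
    simpa [defFam, map_sum, map_smul, map_mul, j_pow h, j_t] using this
  have hg2 : D.t * (∑ i : Fin (n+1), g (Sum.inr i) • ut ^ (i : ℕ)) = 0 := by
    rw [Finset.mul_sum]
    simp only [mul_smul_comm]
    simpa [defFam, ha] using hg
  obtain ⟨y, hy⟩ := (D.t_ann _).1 hg2
  have hb : ∀ i : Fin (n+1), g (Sum.inr i) = 0 := by
    apply hli
    have := congrArg D.j.toAlgHom hy
    simpa [map_sum, map_smul, map_mul, j_pow h, j_t] using this
  intro i
  cases i with
  | inl i => exact ha i
  | inr i => exact hb i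

lemma exists_repr (hR : IsCPnAlg R u n) (h : IsRAlphaDef R u n 2 α D ut)
    (x : D.alg.carrier) : ∃ (c : Fin (n+1) → F) (y : D.alg.carrier),
    x = (∑ i : Fin (n+1), c i • ut ^ (i : ℕ)) + D.t * y := by
  obtain ⟨bR, hbR⟩ := hR.basis
  refine ⟨fun i => bR.repr (D.j.toAlgHom x) i, ?_⟩
  have hsum : ∑ i : Fin (n+1), bR.repr (D.j.toAlgHom x) i • u ^ (i : ℕ)
      = D.j.toAlgHom x := by
    conv_rhs => rw [← bR.sum_repr (D.j.toAlgHom x)]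
    exact Finset.sum_congr rfl fun i _ => by rw [hbR]
  have hker : D.j.toAlgHom (x - ∑ i : Fin (n+1),
      bR.repr (D.j.toAlgHom x) i • ut ^ (i : ℕ)) = 0 := by
    rw [map_sub, map_sum]
    simp only [map_smul, j_pow h]
    rw [hsum, sub_self]
  obtain ⟨y, hy⟩ := (D.j_ker _).1 hker
  exact ⟨y, by rw [← hy]; abel⟩

lemma fam_span (hR : IsCPnAlg R u n) (h : IsRAlphaDef R u n 2 α D ut) :
    ⊤ ≤ Submodule.span F (Set.range (defFam n D ut)) := by
  intro x _
  obtain ⟨c, y, hx⟩ := exists_repr hR h x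
  obtain ⟨b, z, hy⟩ := exists_repr hR h y
  have hx2 : x = (∑ i : Fin (n+1), c i • ut ^ (i : ℕ))
      + ∑ i : Fin (n+1), b i • (D.t * ut ^ (i : ℕ)) := by
    rw [hx, hy, mul_add, ← mul_assoc, D.t_sq, zero_mul, add_zero, Finset.mul_sum]
    simp only [mul_smul_comm]
  rw [hx2]
  refine Submodule.add_mem _ ?_ ?_ <;>
  · apply Submodule.sum_mem
    intro i _
    apply Submodule.smul_mem
    apply Submodule.subset_span
    first
    | exact ⟨Sum.inl i, rfl⟩
    | exact ⟨Sum.inr i, rfl⟩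

variable (hR : IsCPnAlg R u n) (h : IsRAlphaDef R u n 2 α D ut) in
noncomputable def defBasis : Module.Basis (Fin (n+1) ⊕ Fin (n+1)) F D.alg.carrier :=
  Module.Basis.mk (fam_li hR h) (fam_span hR h)

lemma defBasis_apply (hR : IsCPnAlg R u n) (h : IsRAlphaDef R u n 2 α D ut)
    (i : Fin (n+1) ⊕ Fin (n+1)) : defBasis hR h i = defFam n D ut i :=
  Module.Basis.mk_apply _ _ _

lemma grading_le_span (A : GradedFAlg F) {ι : Type} [Fintype ι]
    (b : Module.Basis ι F A.carrier) (deg : ι → ℤ) (hb : ∀ i, b i ∈ A.grading (deg i)) (k : ℤ) :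
    A.grading k ≤ Submodule.span F ((fun i => b i) '' {i | deg i = k}) := by
  classical
  intro x hx
  have hxk : ((DirectSum.decompose A.grading x) k : A.carrier) = x :=
    DirectSum.decompose_of_mem_same _ hx
  have hrepr : ∑ i, b.repr x i • b i = x := b.sum_repr x
  have hx' : x = ∑ i, if deg i = k then b.repr x i • b i else 0 := by
    conv_lhs => rw [← hxk]
    conv_lhs => rw [← hrepr]
    rw [DirectSum.decompose_sum, DFinsupp.finset_sum_apply, AddSubmonoidClass.coe_finset_sum]
    apply Finset.sum_congr rfl
    intro i _
    rw [DirectSum.decompose_smul, DFinsupp.smul_apply]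
    by_cases hdi : deg i = k
    · rw [if_pos hdi]
      subst hdi
      rw [SetLike.val_smul, DirectSum.decompose_of_mem_same _ (hb i)]
    · rw [if_neg hdi, SetLike.val_smul, DirectSum.decompose_of_mem_ne _ (hb i) hdi,
        smul_zero]
  rw [hx']
  apply Submodule.sum_mem
  intro i _
  by_cases hdi : deg i = k
  · rw [if_pos hdi]
    exact Submodule.smul_mem _ _ (Submodule.subset_span ⟨i, hdi, rfl⟩)
  · rw [if_neg hdi]; exact Submodule.zero_mem _

lemma map_grading {A B : GradedFAlg F} (φ : A.carrier →ₗ[F] B.carrier) {ι : Type}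
    [Fintype ι] (b : Module.Basis ι F A.carrier) (deg : ι → ℤ)
    (hb : ∀ i, b i ∈ A.grading (deg i)) (hφ : ∀ i, φ (b i) ∈ B.grading (deg i))
    (k : ℤ) (x : A.carrier) (hx : x ∈ A.grading k) : φ x ∈ B.grading k := by
  have h1 : x ∈ Submodule.span F ((fun i => b i) '' {i | deg i = k}) :=
    grading_le_span A b deg hb k hx
  have h2 : φ x ∈ Submodule.map φ (Submodule.span F ((fun i => b i) '' {i | deg i = k})) :=
    ⟨x, h1, rfl⟩
  rw [Submodule.map_span] at h2
  refine Submodule.span_le.2 ?_ h2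
  rintro _ ⟨_, ⟨i, hi, rfl⟩, rfl⟩
  exact hi ▸ hφ i

variable (n) in
def defDeg : Fin (n+1) ⊕ Fin (n+1) → ℤ :=
  Sum.elim (fun i => 2 * (i : ℕ)) (fun i => 2 * (i : ℕ) + 2)

lemma fam_mem (h : IsRAlphaDef R u n 2 α D ut) (i : Fin (n+1) ⊕ Fin (n+1)) :
    defFam n D ut i ∈ D.alg.grading (defDeg n i) := by
  cases i with
  | inl i =>
    have := SetLike.pow_mem_graded (i : ℕ) h.mem
    convert this using 2
    simp [defDeg, nsmul_eq_mul, mul_comm]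
    rfl
  | inr i =>
    have := SetLike.mul_mem_graded D.t_mem (SetLike.pow_mem_graded (i : ℕ) h.mem)
    convert this using 2
    simp [defDeg, nsmul_eq_mul, mul_comm]
    ring
    rfl

lemma pow_mul_t_pow (h : IsRAlphaDef R u n 2 α D ut) (a b : ℕ) :
    ut ^ a * (D.t * ut ^ b) = D.t * ut ^ (a + b) := by
  rw [← mul_assoc, ← tcomm_pow h, mul_assoc, ← pow_add]

lemma t_pow_mul_t_pow (h : IsRAlphaDef R u n 2 α D ut) (a b : ℕ) :
    (D.t * ut ^ a) * (D.t * ut ^ b) = 0 := by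
  rw [mul_assoc, pow_mul_t_pow h, ← mul_assoc, D.t_sq, zero_mul]

lemma t_pow_mul_pow (h : IsRAlphaDef R u n 2 α D ut) (a b : ℕ) :
    (D.t * ut ^ a) * ut ^ b = D.t * ut ^ (a + b) := by
  rw [mul_assoc, ← pow_add]

lemma iso_of_same_alpha {D1 D2 : Deformation F R 2} {ut1 : D1.alg.carrier}
    {ut2 : D2.alg.carrier} (hR : IsCPnAlg R u n)
    (h1 : IsRAlphaDef R u n 2 α D1 ut1) (h2 : IsRAlphaDef R u n 2 α D2 ut2) :
    Deformation.Iso D1 D2 := by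
  classical
  set B1 := defBasis hR h1 with hB1
  set B2 := defBasis hR h2 with hB2
  set L := B1.equiv B2 (Equiv.refl _) with hL
  have hLfam : ∀ i, L (defFam n D1 ut1 i) = defFam n D2 ut2 i := by
    intro i
    rw [← defBasis_apply hR h1, ← defBasis_apply hR h2, ← hB1, ← hB2, hL,
      Module.Basis.equiv_apply, Equiv.refl_apply]
  have hLpow : ∀ m : ℕ, L (ut1 ^ m) = ut2 ^ m := by
    intro m
    rcases lt_or_ge m (n+1) with hm | hm
    · simpa [defFam] using hLfam (Sum.inl ⟨m, hm⟩)
    rcases eq_or_lt_of_le hm with hm' | hm'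
    · subst hm'
      have hlf := hLfam (Sum.inr ⟨n, n.lt_succ_self⟩)
      simp only [defFam, Sum.elim_inr] at hlf
      rw [rel' h1, map_neg, map_smul, hlf, ← rel' h2]
    · rw [pow_ge h1 (by omega), pow_ge h2 (by omega), map_zero]
  have hLt : ∀ m : ℕ, L (D1.t * ut1 ^ m) = D2.t * ut2 ^ m := by
    intro m
    rcases lt_or_ge m (n+1) with hm | hm
    · simpa [defFam] using hLfam (Sum.inr ⟨m, hm⟩)
    · rw [t_mul_ge h1 hm, t_mul_ge h2 hm, map_zero]
  have hone : L.toLinearMap 1 = 1 := by simpa using hLpow 0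
  have hkey : ∀ i j, L (defFam n D1 ut1 i * defFam n D1 ut1 j)
      = L (defFam n D1 ut1 i) * L (defFam n D1 ut1 j) := by
    intro i j
    cases i with
    | inl i =>
      cases j with
      | inl j =>
        simp only [defFam, Sum.elim_inl, ← pow_add, hLpow, hLfam]
      | inr j =>
        simp only [defFam, Sum.elim_inl, Sum.elim_inr, hLfam, hLpow,
          pow_mul_t_pow h1, pow_mul_t_pow h2, hLt]
    | inr i =>
      cases j with
      | inl j =>
        simp only [defFam, Sum.elim_inl, Sum.elim_inr, hLfam, hLpow,
          t_pow_mul_pow h1, t_pow_mul_pow h2, hLt]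
      | inr j =>
        simp only [defFam, Sum.elim_inr, hLt, t_pow_mul_t_pow h1,
          t_pow_mul_t_pow h2, map_zero]
  have hmul : ∀ x y : D1.alg.carrier, L.toLinearMap (x * y)
      = L.toLinearMap x * L.toLinearMap y := by
    have heq : (LinearMap.mul F D1.alg.carrier).compr₂ L.toLinearMap
        = (LinearMap.mul F D2.alg.carrier).compl₁₂ L.toLinearMap L.toLinearMap := by
      apply LinearMap.ext_basis B1 B1
      intro i j
      simp only [LinearMap.compr₂_apply, LinearMap.compl₁₂_apply, LinearMap.mul_apply']
      rw [defBasis_apply hR h1, defBasis_apply hR h1]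
      exact hkey i j
    intro x y
    have := LinearMap.congr_fun (LinearMap.congr_fun heq x) y
    simpa using this
  set φ : D1.alg.carrier →ₐ[F] D2.alg.carrier := AlgHom.ofLinearMap L.toLinearMap hone hmul
    with hφ
  have hφapp : ∀ x, φ x = L x := fun x => rfl
  have hgraded : ∀ (k : ℤ) (x : D1.alg.carrier), x ∈ D1.alg.grading k →
      φ x ∈ D2.alg.grading k := by
    intro k x hx
    refine map_grading L.toLinearMap B1 (defDeg n) ?_ ?_ k x hx
    · intro i; rw [defBasis_apply hR h1]; exact fam_mem h1 i
    · intro i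
      rw [LinearEquiv.coe_coe, defBasis_apply hR h1, hLfam i]
      exact fam_mem h2 i
  have hmapt : φ D1.t = D2.t := by
    have := hLt 0
    simpa [hφapp] using this
  have hover : ∀ x, D2.j.toAlgHom (φ x) = (GradedFAlg.Hom.id R).toAlgHom
      (D1.j.toAlgHom x) := by
    have heq : D2.j.toAlgHom.toLinearMap.comp L.toLinearMap
        = D1.j.toAlgHom.toLinearMap := by
      apply Module.Basis.ext B1
      intro i
      rw [LinearMap.comp_apply, AlgHom.toLinearMap_apply, AlgHom.toLinearMap_apply,
        LinearEquiv.coe_coe, defBasis_apply hR h1]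
      cases i with
      | inl i =>
        rw [show defFam n D1 ut1 (Sum.inl i) = ut1 ^ (i:ℕ) from rfl, hLpow,
          j_pow h1, j_pow h2]
      | inr i =>
        rw [show defFam n D1 ut1 (Sum.inr i) = D1.t * ut1 ^ (i:ℕ) from rfl, hLt,
          map_mul, map_mul, j_t, j_t, zero_mul, zero_mul]
    intro x
    have := LinearMap.congr_fun heq x
    simpa [GradedFAlg.Hom.id, hφapp] using this
  exact ⟨⟨⟨φ, hgraded⟩, hmapt, hover⟩, L.bijective⟩

lemma shift_ut {β γ : F} (hn : 1 ≤ n) (h2 : IsRAlphaDef R u n 2 β D ut)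
    (hγ : β - α = γ * ((n : F) + 1)) :
    IsRAlphaDef R u n 2 α D (ut + γ • D.t) := by
  have htoNat : (((n : ℤ) + 1 - 2 / 2).toNat) = n := by omega
  constructor
  · exact Submodule.add_mem _ h2.mem (Submodule.smul_mem _ _ D.t_mem)
  · rw [map_add, map_smul, h2.j_u, j_t, smul_zero, add_zero]
  · rw [htoNat]
    set X := D.t * ut ^ n with hX
    have hcomm := tcomm h2
    have hv : (ut + γ • D.t) ^ (n+1) = ut ^ (n+1) + (((n+1 : ℕ) : F) * γ) • X :=
      add_smul_t_pow D.t_sq hcomm γ n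
    obtain ⟨k, hk⟩ : ∃ k, n = k + 1 := ⟨n - 1, by omega⟩
    have hvn : D.t * (ut + γ • D.t) ^ n = X := by
      rw [hX, hk, add_smul_t_pow D.t_sq hcomm γ k, mul_add, mul_smul_comm,
        ← mul_assoc, D.t_sq, zero_mul, smul_zero, add_zero]
    rw [hv, hvn, rel' h2]
    have hsmul : -(β • X) + ((((n+1 : ℕ) : F) * γ) • X) + α • X
        = (-β + ((n+1 : ℕ) : F) * γ + α) • X := by
      rw [add_smul, add_smul, neg_smul]
    rw [← hX, hsmul]
    have hc : -β + ((n+1 : ℕ) : F) * γ + α = 0 := by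
      push_cast
      linear_combination -hγ
    rw [hc, zero_smul]

lemma iso_gives {β : F} {D1 D2 : Deformation F R 2} {ut1 : D1.alg.carrier}
    {ut2 : D2.alg.carrier} (hn : 1 ≤ n) (hR : IsCPnAlg R u n)
    (h1 : IsRAlphaDef R u n 2 α D1 ut1) (h2 : IsRAlphaDef R u n 2 β D2 ut2)
    (φ : DefMorphismOver (GradedFAlg.Hom.id R) D1 D2) :
    ∃ γ : F, β - α = γ * ((n : F) + 1) := by
  classical
  set f := φ.toHom.toAlgHom with hf
  set w := f ut1 with hw
  have hwj : D2.j.toAlgHom w = u := by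
    rw [hw, φ.over', h1.j_u]; rfl
  have hwmem : w ∈ D2.alg.grading 2 := φ.toHom.graded 2 ut1 h1.mem
  have hsub : ((fun i => defBasis hR h2 i) '' {i | defDeg n i = 2} : Set D2.alg.carrier)
      ⊆ {ut2, D2.t} := by
    rintro _ ⟨i, hi, rfl⟩
    cases i with
    | inl i =>
      have hi1 : (i : ℕ) = 1 := by
        simp only [Set.mem_setOf_eq, defDeg, Sum.elim_inl] at hi; omega
      simp [defBasis_apply hR h2, defFam, hi1]
    | inr i =>
      have hi0 : (i : ℕ) = 0 := by
        simp only [Set.mem_setOf_eq, defDeg, Sum.elim_inr] at hi; omega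
      simp [defBasis_apply hR h2, defFam, hi0]
  have hspan : w ∈ Submodule.span F ({ut2, D2.t} : Set D2.alg.carrier) :=
    Submodule.span_mono hsub
      (grading_le_span D2.alg (defBasis hR h2) (defDeg n)
        (fun i => by rw [defBasis_apply hR h2]; exact fam_mem h2 i) 2 hwmem)
  obtain ⟨a, b, hab⟩ := Submodule.mem_span_pair.1 hspan
  have hu : u ≠ 0 := by have := upow_ne hR hn; rwa [pow_one] at this
  have ha : a = 1 := by
    have hj := hwj
    rw [← hab, map_add, map_smul, map_smul, h2.j_u, j_t, smul_zero, add_zero] at hj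
    have hz : (a - 1) • u = 0 := by rw [sub_smul, one_smul, hj, sub_self]
    rcases smul_eq_zero.1 hz with h | h
    · exact sub_eq_zero.1 h
    · exact absurd h hu
  have hwe : w = ut2 + b • D2.t := by rw [← hab, ha, one_smul]
  have hrel1 : w ^ (n+1) = -(α • (D2.t * w ^ n)) := by
    have := congrArg f (rel' h1)
    rwa [map_pow, map_neg, map_smul, map_mul, map_pow, φ.map_t, ← hw] at this
  set X := D2.t * ut2 ^ n with hX
  have hcomm := tcomm h2
  have hv : w ^ (n+1) = ut2 ^ (n+1) + (((n+1 : ℕ) : F) * b) • X := by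
    rw [hwe]; exact add_smul_t_pow D2.t_sq hcomm b n
  obtain ⟨k, hk⟩ : ∃ k, n = k + 1 := ⟨n - 1, by omega⟩
  have hvn : D2.t * w ^ n = X := by
    rw [hwe, hX, hk, add_smul_t_pow D2.t_sq hcomm b k, mul_add, mul_smul_comm,
      ← mul_assoc, D2.t_sq, zero_mul, smul_zero, add_zero]
  have hzero : (-β + ((n+1 : ℕ) : F) * b + α) • X = 0 := by
    rw [add_smul, add_smul, neg_smul, ← rel' h2, ← hv, hrel1, hvn]
    abel
  have hXne : X ≠ 0 := t_mul_pow_ne hR h2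
  have hc : -β + ((n+1 : ℕ) : F) * b + α = 0 :=
    (smul_eq_zero.1 hzero).resolve_right hXne
  refine ⟨b, ?_⟩
  push_cast at hc
  linear_combination -hc
end Helpers
/-- Let `R = F[u]/(u^{n+1})` with `deg u = 2`, `n ≥ 1`, and
`d = 2`. For `α, β ∈ F`, the deformations `(R̃_α, t, j)` and `(R̃_β, t, j)` of
`R` are isomorphic as deformations of `R` if and only if `β − α = γ·(n+1)` for
some `γ ∈ F`. -/
theorem Ralpha_iso_Rbeta_d_two
    {F : Type} [Field F] (R : GradedFAlg F) (u : R.carrier) (n : ℕ) (hn : 1 ≤ n)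
    (hR : IsCPnAlg R u n) (α β : F)
    (D1 D2 : Deformation F R 2) (ut1 : D1.alg.carrier) (ut2 : D2.alg.carrier)
    (h1 : IsRAlphaDef R u n 2 α D1 ut1) (h2 : IsRAlphaDef R u n 2 β D2 ut2) :
    Deformation.Iso D1 D2 ↔ ∃ γ : F, β - α = γ * ((n : F) + 1) := by
  constructor
  · rintro ⟨φ, -⟩
    exact iso_gives hn hR h1 h2 φ
  · rintro ⟨γ, hγ⟩
    exact iso_of_same_alpha hR h1 (shift_ut hn h2 hγ)
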